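/- With M as the Riccati block matrix above and H_E*H_E ≻ 0, for every n_E×n_M matrix U₁ the columns of the block vector (U₁; H_E(H_E*H_E)⁻¹H_M*U₁) lie in the kernel of M + I. -/
import Mathlib


open Matrix
open scoped ComplexOrder

/-- With M the Riccati block matrix and H_E*H_E ≻ 0, for every matrix U₁ (with n_M
rows) the columns of the block vector (U₁; H_E(H_E*H_E)⁻¹H_M*U₁) lie in the kernel of
M + I. -/
theorem stmt_12 {n nM nE : ℕ}
    (HM : Matrix (Fin nM) (Fin n) ℂ) (HE : Matrix (Fin nE) (Fin n) ℂ)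
    (KX : Matrix (Fin n) (Fin n) ℂ) (hK : KX.PosSemidef)
    (hE : (HEᴴ * HE).PosDef)
    (M : Matrix (Fin nM ⊕ Fin nE) (Fin nM ⊕ Fin nE) ℂ)
    (hM : M = fromBlocks
      (-(HM * KX * HMᴴ + 1)⁻¹)
      (-(HM * KX * HMᴴ + 1)⁻¹ * (HM * KX * HEᴴ))
      (HE * KX * HMᴴ * (HM * KX * HMᴴ + 1)⁻¹)
      (-(HE * KX * HEᴴ) - 1 + HE * KX * HMᴴ * (HM * KX * HMᴴ + 1)⁻¹ * (HM * KX * HEᴴ)))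
    (U₁ : Matrix (Fin nM) (Fin nM) ℂ) :
    (M + 1) * fromRows U₁ (HE * (HEᴴ * HE)⁻¹ * HMᴴ * U₁) = 0 := by
  subst hM
  set A := HM * KX * HMᴴ + 1 with hA
  set V := HE * (HEᴴ * HE)⁻¹ * HMᴴ * U₁ with hV
  have hApd : A.PosDef :=
    Matrix.PosDef.posSemidef_add (hK.mul_mul_conjTranspose_same HM) Matrix.PosDef.one
  have hAdet : IsUnit A.det := (Matrix.isUnit_iff_isUnit_det _).mp hApd.isUnit
  have hAinv : A⁻¹ * A = 1 := Matrix.nonsing_inv_mul _ hAdet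
  have hEdet : IsUnit (HEᴴ * HE).det := (Matrix.isUnit_iff_isUnit_det _).mp hE.isUnit
  have key : HEᴴ * V = HMᴴ * U₁ := by
    rw [hV]
    simp only [← Matrix.mul_assoc]
    rw [Matrix.mul_nonsing_inv _ hEdet, Matrix.one_mul]
  have h2 : HM * KX * HEᴴ * V = (A - 1) * U₁ := by
    rw [Matrix.mul_assoc, key, hA, add_sub_cancel_right]
    simp [Matrix.mul_assoc]
  have h3 : HE * KX * HEᴴ * V = HE * KX * HMᴴ * U₁ := by
    rw [Matrix.mul_assoc, key]
    simp [Matrix.mul_assoc]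
  rw [← Matrix.fromBlocks_one, Matrix.fromBlocks_add, Matrix.fromBlocks_mul_fromRows,
    ← Matrix.fromRows_zero, Matrix.fromRows_ext_iff]
  constructor
  · have e1 : -A⁻¹ * (A - 1) = A⁻¹ - 1 := by
      rw [neg_mul, mul_sub, hAinv, mul_one, neg_sub]
    rw [add_zero, Matrix.mul_assoc, h2, ← Matrix.mul_assoc, e1]
    noncomm_ring
  · have h4 : HE * KX * HMᴴ * A⁻¹ * (HM * KX * HEᴴ) * V
        = HE * KX * HMᴴ * U₁ - HE * KX * HMᴴ * A⁻¹ * U₁ := by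
      rw [Matrix.mul_assoc _ _ V, h2, ← Matrix.mul_assoc, Matrix.mul_sub, Matrix.mul_one,
        Matrix.sub_mul, Matrix.mul_assoc _ A⁻¹ A, hAinv, Matrix.mul_one]
    simp only [Matrix.add_mul, Matrix.sub_mul, Matrix.neg_mul, Matrix.one_mul,
      Matrix.zero_mul, add_zero]
    rw [h3, h4]
    noncomm_ring
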